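/- Assume that π(x) < li(x) for all real x with 2 < x ≤ 1.39·10^17, and that |li(x) − li_*(x)| ≤ 1.265692883423 for all real x ≥ e. Then π(x) ≤ li̅(x) ≤ li_1(x) for all real x with e ≤ x ≤ 1.39·10^17. -/

import Mathlib

/-- The Stieltjes asymptotic approximation of `li(x)`:
`li_*(x) = (x/log x)·Σ_{k=0}^{n−1} k!/(log x)^k + (log x − n)·x·n!/(log x)^(n+1)`
with `n = ⌊log x⌋`. -/
noncomputable def liStar (x : ℝ) : ℝ :=
  x / Real.log x *
      ∑ k ∈ Finset.range ⌊Real.log x⌋₊, (Nat.factorial k : ℝ) / Real.log x ^ k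
    + (Real.log x - ⌊Real.log x⌋₊) * x * (Nat.factorial ⌊Real.log x⌋₊ : ℝ)
      / Real.log x ^ (⌊Real.log x⌋₊ + 1)

/-- The truncated asymptotic approximation of `li(x)` with truncation parameter `κ`
and fractional coefficient `α`:
`li_{κ,α}(x) = (x/log x)·(α·m!/(log x)^m + Σ_{k=0}^{m−1} k!/(log x)^k)` with
`m = ⌊κ·log x⌋`. -/
noncomputable def liApprox (κ α x : ℝ) : ℝ :=
  x / Real.log x *
    (α * (Nat.factorial ⌊κ * Real.log x⌋₊ : ℝ) / Real.log x ^ ⌊κ * Real.log x⌋₊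
      + ∑ k ∈ Finset.range ⌊κ * Real.log x⌋₊, (Nat.factorial k : ℝ) / Real.log x ^ k)

/-- The logarithmic integral `li(x)`, the Cauchy principal value of `∫₀ˣ dt/log t`. -/
noncomputable def li (x : ℝ) : ℝ :=
  Filter.limUnder (nhdsWithin (0 : ℝ) (Set.Ioi 0)) fun ε =>
    (∫ t in (0 : ℝ)..(1 - ε), 1 / Real.log t) + ∫ t in (1 + ε)..x, 1 / Real.log t

/-- `exp 1 * n^n ≤ n! * exp n` for `n ≥ 1`. -/
lemma exp_one_mul_pow_le_factorial_mul_exp (n : ℕ) (hn : 1 ≤ n) :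
    Real.exp 1 * (n : ℝ) ^ n ≤ (Nat.factorial n : ℝ) * Real.exp n := by
  induction n, hn using Nat.le_induction with
  | base => simp [Nat.factorial]
  | succ k hk ih =>
    have hk0 : (0 : ℝ) < k := by exact_mod_cast hk
    have h1 : ((k : ℝ) + 1) ≤ k * Real.exp (1 / k) := by
      have h := Real.add_one_le_exp (1 / (k : ℝ))
      calc ((k : ℝ) + 1) = k * (1 / k + 1) := by field_simp; ring
        _ ≤ k * Real.exp (1 / k) := mul_le_mul_of_nonneg_left h hk0.le
    have h2 : ((k : ℝ) + 1) ^ k ≤ (k : ℝ) ^ k * Real.exp 1 := by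
      calc ((k : ℝ) + 1) ^ k ≤ ((k : ℝ) * Real.exp (1 / k)) ^ k :=
            pow_le_pow_left₀ (by positivity) h1 k
        _ = (k : ℝ) ^ k * Real.exp (1 / k) ^ k := mul_pow _ _ _
        _ = (k : ℝ) ^ k * Real.exp 1 := by
            rw [← Real.exp_nat_mul]
            congr 1
            field_simp
    have hc : ((k + 1 : ℕ) : ℝ) = (k : ℝ) + 1 := by push_cast; ring
    have hfact : (((k + 1).factorial : ℕ) : ℝ) = ((k : ℝ) + 1) * (k.factorial : ℝ) := by
      push_cast [Nat.factorial_succ]; ring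
    rw [hc, hfact, Real.exp_add]
    calc Real.exp 1 * ((k : ℝ) + 1) ^ (k + 1)
        = (Real.exp 1 * ((k : ℝ) + 1)) * ((k : ℝ) + 1) ^ k := by ring
      _ ≤ (Real.exp 1 * ((k : ℝ) + 1)) * ((k : ℝ) ^ k * Real.exp 1) := by
          apply mul_le_mul_of_nonneg_left h2 (by positivity)
      _ = ((k : ℝ) + 1) * Real.exp 1 * (Real.exp 1 * (k : ℝ) ^ k) := by ring
      _ ≤ ((k : ℝ) + 1) * Real.exp 1 * ((k.factorial : ℝ) * Real.exp k) := by
          apply mul_le_mul_of_nonneg_left ih (by positivity)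
      _ = ((k : ℝ) + 1) * (k.factorial : ℝ) * (Real.exp k * Real.exp 1) := by ring

/-- From the defining equation, `κ ≥ 3/2`. -/
lemma kappa_ge_three_halves (κ : ℝ) (hκ1 : 1 < κ)
    (hsol : κ * (1 - Real.log κ) = 1 / 2) : 3 / 2 ≤ κ := by
  by_contra h
  push_neg at h
  have hκ0 : (0 : ℝ) < κ := by linarith
  have hexp42 : (3 / 2 : ℝ) < Real.exp 0.42 := by
    have hb : (1.0525 : ℝ) ≤ Real.exp 0.0525 := by
      have := Real.add_one_le_exp (0.0525 : ℝ); linarith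
    have h8 : (1.0525 : ℝ) ^ 8 ≤ Real.exp 0.0525 ^ 8 :=
      pow_le_pow_left₀ (by norm_num) hb 8
    have heq : Real.exp 0.0525 ^ 8 = Real.exp 0.42 := by
      rw [← Real.exp_nat_mul]; norm_num
    have hlt : (3 / 2 : ℝ) < (1.0525 : ℝ) ^ 8 := by norm_num
    rw [heq] at h8
    linarith
  have hlogκ : Real.log κ < 0.42 := by
    rw [Real.log_lt_iff_lt_exp hκ0]
    linarith
  -- hsol: κ - κ log κ = 1/2, with log κ < 0.42 and κ > 1 gives κ < 1, contradiction
  nlinarith [mul_lt_mul_of_pos_left hlogκ hκ0, hsol, hκ0, hκ1]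

set_option maxHeartbeats 1000000 in
theorem primeCounting_le_liOver (κ : ℝ) (hκ1 : 1 < κ) (hκe : κ < Real.exp 1)
    (hsol : κ * (1 - Real.log κ) = 1 / 2)
    (hlt : ∀ x : ℝ, 2 < x → x ≤ 1.39e17 → (Nat.primeCounting ⌊x⌋₊ : ℝ) < li x)
    (herr : ∀ x : ℝ, Real.exp 1 ≤ x → |li x - liStar x| ≤ 1.265692883423)
    (x : ℝ) (hx : Real.exp 1 ≤ x) (hx' : x ≤ 1.39e17) :
    (Nat.primeCounting ⌊x⌋₊ : ℝ) ≤
        liApprox κ (κ * Real.log x - ⌊κ * Real.log x⌋₊) x ∧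
      liApprox κ (κ * Real.log x - ⌊κ * Real.log x⌋₊) x ≤ liApprox κ 1 x := by
  have he1 : (2.7182818283 : ℝ) < Real.exp 1 := Real.exp_one_gt_d9
  have hx0 : (0 : ℝ) < x := lt_of_lt_of_le (Real.exp_pos 1) hx
  set L := Real.log x with hLdef
  have hL1 : 1 ≤ L := (Real.le_log_iff_exp_le hx0).2 hx
  have hL0 : (0 : ℝ) < L := by linarith
  have hxL : Real.exp L = x := Real.exp_log hx0
  have hκ32 : (3 / 2 : ℝ) ≤ κ := kappa_ge_three_halves κ hκ1 hsol
  set n := ⌊L⌋₊ with hndef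
  set m := ⌊κ * L⌋₊ with hmdef
  have hnle : (n : ℝ) ≤ L := Nat.floor_le hL0.le
  have hln : L < n + 1 := Nat.lt_floor_add_one L
  have hn1 : 1 ≤ n := Nat.le_floor (by exact_mod_cast hL1)
  have hn0 : (0 : ℝ) < n := by exact_mod_cast hn1
  have hκL : L ≤ κ * L := by nlinarith
  have hnm : n ≤ m := Nat.floor_mono hκL
  have hmle : (m : ℝ) ≤ κ * L := Nat.floor_le (by positivity)
  have hα0 : 0 ≤ κ * L - m := by linarith
  have hα1 : κ * L - m ≤ 1 := by
    have := Nat.lt_floor_add_one (κ * L)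
    rw [← hmdef] at this
    linarith
  -- term monotonicity
  have hT : ∀ k : ℕ, n ≤ k →
      (n.factorial : ℝ) / L ^ n ≤ (k.factorial : ℝ) / L ^ k := by
    intro k hk
    induction k, hk using Nat.le_induction with
    | base => exact le_refl _
    | succ j hj ih =>
      refine le_trans ih ?_
      rw [div_le_div_iff₀ (by positivity) (by positivity)]
      have hjn : (n : ℝ) ≤ j := by exact_mod_cast hj
      have hLj : L ≤ (j : ℝ) + 1 := by linarith
      have hfs : ((j + 1).factorial : ℝ) = ((j : ℝ) + 1) * (j.factorial : ℝ) := by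
        push_cast [Nat.factorial_succ]; ring
      rw [hfs, pow_succ]
      have hjf : (0 : ℝ) < (j.factorial : ℝ) := by exact_mod_cast j.factorial_pos
      have hLjp : (0 : ℝ) < L ^ j := by positivity
      nlinarith [mul_le_mul_of_nonneg_left hLj (mul_pos hjf hLjp).le]
  set A : ℝ := (n.factorial : ℝ) / L ^ n with hAdef
  have hA0 : (0 : ℝ) < A := by
    have : (0 : ℝ) < (n.factorial : ℝ) := by exact_mod_cast n.factorial_pos
    positivity
  -- x * A ≥ e
  have hxA : Real.exp 1 ≤ x * A := by
    have h3 : L ≤ (n : ℝ) * Real.exp ((L - n) / n) := by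
      have h := Real.add_one_le_exp ((L - (n : ℝ)) / n)
      have := mul_le_mul_of_nonneg_left h hn0.le
      calc L = (n : ℝ) * ((L - n) / n + 1) := by field_simp; ring
        _ ≤ (n : ℝ) * Real.exp ((L - n) / n) := mul_le_mul_of_nonneg_left h hn0.le
    have h2 : L ^ n ≤ (n : ℝ) ^ n * Real.exp (L - n) := by
      calc L ^ n ≤ ((n : ℝ) * Real.exp ((L - n) / n)) ^ n :=
            pow_le_pow_left₀ hL0.le h3 n
        _ = (n : ℝ) ^ n * Real.exp ((L - n) / n) ^ n := mul_pow _ _ _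
        _ = (n : ℝ) ^ n * Real.exp (L - n) := by
            rw [← Real.exp_nat_mul]
            congr 1
            field_simp
    have h1 := exp_one_mul_pow_le_factorial_mul_exp n hn1
    have key : Real.exp 1 * L ^ n ≤ (n.factorial : ℝ) * Real.exp L := by
      calc Real.exp 1 * L ^ n ≤ Real.exp 1 * ((n : ℝ) ^ n * Real.exp (L - n)) :=
            mul_le_mul_of_nonneg_left h2 (Real.exp_pos 1).le
        _ = (Real.exp 1 * (n : ℝ) ^ n) * Real.exp (L - n) := by ring
        _ ≤ ((n.factorial : ℝ) * Real.exp n) * Real.exp (L - n) :=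
            mul_le_mul_of_nonneg_right h1 (Real.exp_pos _).le
        _ = (n.factorial : ℝ) * Real.exp L := by
            rw [mul_assoc, ← Real.exp_add]
            congr 2
            ring
    rw [hAdef, ← hxL, ← mul_div_assoc, le_div_iff₀ (by positivity)]
    calc Real.exp 1 * L ^ n ≤ (n.factorial : ℝ) * Real.exp L := key
      _ = Real.exp L * (n.factorial : ℝ) := by ring
  -- the gap bound : liStar x + 1.265692883423 ≤ liApprox κ α x
  have hgap : liStar x + 1.265692883423 ≤ liApprox κ (κ * L - m) x := by
    have hsplit :
        (∑ k ∈ Finset.range n, (Nat.factorial k : ℝ) / L ^ k)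
          + ∑ k ∈ Finset.Ico n m, (Nat.factorial k : ℝ) / L ^ k
          = ∑ k ∈ Finset.range m, (Nat.factorial k : ℝ) / L ^ k :=
      Finset.sum_range_add_sum_Ico _ hnm
    have hsum : ((m - n : ℕ) : ℝ) * A ≤
        ∑ k ∈ Finset.Ico n m, (Nat.factorial k : ℝ) / L ^ k := by
      have := Finset.card_nsmul_le_sum (Finset.Ico n m)
        (fun k => (Nat.factorial k : ℝ) / L ^ k) A
        (fun k hk => hT k (Finset.mem_Ico.mp hk).1)
      simpa [Nat.card_Ico, nsmul_eq_mul] using this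
    have hcast : ((m - n : ℕ) : ℝ) = (m : ℝ) - n := by
      rw [Nat.cast_sub hnm]
    have hFm : A ≤ (m.factorial : ℝ) / L ^ m := hT m hnm
    -- bracket bound
    have hbr : (κ * L - L) * A ≤
        (κ * L - m) * ((m.factorial : ℝ) / L ^ m)
          + (∑ k ∈ Finset.Ico n m, (Nat.factorial k : ℝ) / L ^ k)
          - (L - n) * A := by
      have t1 : (κ * L - m) * A ≤ (κ * L - m) * ((m.factorial : ℝ) / L ^ m) :=
        mul_le_mul_of_nonneg_left hFm hα0
      have t2 : ((m : ℝ) - n) * A ≤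
          ∑ k ∈ Finset.Ico n m, (Nat.factorial k : ℝ) / L ^ k := by
        rw [← hcast]; exact hsum
      nlinarith [t1, t2]
    have hstar : liStar x = x / L * (∑ k ∈ Finset.range n, (Nat.factorial k : ℝ) / L ^ k)
        + x / L * ((L - n) * A) := by
      rw [liStar, hAdef]
      rw [← hLdef, ← hndef]
      congr 1
      rw [pow_succ]
      field_simp
    have happrox : liApprox κ (κ * L - m) x
        = x / L * ((κ * L - m) * ((m.factorial : ℝ) / L ^ m)
          + ((∑ k ∈ Finset.range n, (Nat.factorial k : ℝ) / L ^ k)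
            + ∑ k ∈ Finset.Ico n m, (Nat.factorial k : ℝ) / L ^ k)) := by
      rw [liApprox, ← hLdef, ← hmdef, hsplit]
      ring
    have hxLpos : (0 : ℝ) < x / L := by positivity
    have hmain : (κ - 1) * (x * A) ≤ liApprox κ (κ * L - m) x - liStar x := by
      rw [happrox, hstar]
      have h4 : x / L * ((κ * L - L) * A) ≤ x / L *
          ((κ * L - m) * ((m.factorial : ℝ) / L ^ m)
            + (∑ k ∈ Finset.Ico n m, (Nat.factorial k : ℝ) / L ^ k)
            - (L - n) * A) :=
        mul_le_mul_of_nonneg_left hbr hxLpos.le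
      have h5 : x / L * ((κ * L - L) * A) = (κ - 1) * (x * A) := by
        field_simp
      linarith [h4, h5.symm.le]
    have hnum : (1.265692883423 : ℝ) ≤ (κ - 1) * (x * A) := by
      have hxAe : (2.7182818283 : ℝ) ≤ x * A := le_trans he1.le hxA
      have h6 : (1 / 2 : ℝ) * (2.7182818283 : ℝ) ≤ (κ - 1) * (x * A) :=
        mul_le_mul (by linarith) hxAe (by norm_num) (by linarith)
      linarith
    linarith
  constructor
  · have h2x : (2 : ℝ) < x := by linarith
    have hπ := hlt x h2x hx'
    have herr' := herr x hx
    rw [abs_le] at herr'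
    linarith [herr'.1, herr'.2, hgap, hπ]
  · rw [liApprox, liApprox, ← hLdef, ← hmdef]
    have hxLpos : (0 : ℝ) ≤ x / L := by positivity
    apply mul_le_mul_of_nonneg_left _ hxLpos
    apply add_le_add_left
    apply div_le_div_of_nonneg_right _ (by positivity)
    · exact mul_le_mul_of_nonneg_right hα1 (by positivity)
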